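/- Every squandle (Q, ⊲, ⊲̃, ς) whose underlying set has exactly 4 elements and in which ⊲ is non-trivial (i.e., a ⊲ b ≠ a for some a,b) is isomorphic either to the squandle S²₃ = {id, (12), (23), (13)} ⊂ S₃ with a ⊲ b = b⁻¹ab and ς(a) = a², or to (P, ⊲, ς_w) for some w ∈ {p, q, s}; moreover, S²₃ and the three structures (P, ⊲, ς_w), w ∈ {p, q, s}, are all squandles and are pairwise non-isomorphic. -/
import Mathlib


/-- The 4-element set `P = {p, q, r, s}`. -/
inductive P4 : Type
  | p | q | r | s
  deriving DecidableEq

/-- The involution `τ` of `P` exchanging `p` and `q` and fixing `r` and `s`. -/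
def tau : P4 → P4
  | .p => .q
  | .q => .p
  | .r => .r
  | .s => .s

/-- The quandle operation `⊲` on `P`: `x ⊲ r = τ(x)`, and `x ⊲ y = x` for `y ≠ r`. -/
def triP : P4 → P4 → P4
  | x, .r => tau x
  | x, _ => x

/-- The squaring operation `ς_w` on `P` with parameter `w ∈ {p, q, s}`. -/
def sqP (w : P4) : P4 → P4
  | .r => .s
  | .s => .s
  | .q => w
  | .p => tau w

/-- The subset `S²₃` of the symmetric group `S₃`, consisting of the identity and the three
transpositions. -/
def S23set : Set (Equiv.Perm (Fin 3)) :=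
  {1, Equiv.swap 0 1, Equiv.swap 1 2, Equiv.swap 0 2}

instance : Fintype P4 :=
  ⟨⟨{P4.p, P4.q, P4.r, P4.s}, by decide⟩, fun x => by cases x <;> decide⟩

lemma triP_ne {x y : P4} (h : triP x y ≠ x) : y = P4.r := by
  cases y <;> first | rfl | exact absurd rfl h

theorem classify (Q : Type) (tri trid : Q → Q → Q) (sq : Q → Q) (hcard : Nat.card Q = 4)
    (hsd : ∀ a b c, tri (tri a b) c = tri (tri a c) (tri b c))
    (hinv : ∀ a b, trid (tri a b) b = a ∧ tri (trid a b) b = a)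
    (hidem : ∀ a, tri a a = a)
    (hsq1 : ∀ a b, tri a (sq b) = tri (tri a b) b)
    (hsq2 : ∀ a b, tri (sq a) b = sq (tri a b))
    (hnt : ∃ a b, tri a b ≠ a) :
    (∃ f : Q → Equiv.Perm (Fin 3), Function.Injective f ∧ Set.range f = S23set ∧
        (∀ x y : Q, f (tri x y) = (f y)⁻¹ * f x * f y) ∧
        (∀ x : Q, f (sq x) = (f x) ^ 2)) ∨
      (∃ w ∈ ({P4.p, P4.q, P4.s} : Set P4), ∃ f : Q → P4, Function.Bijective f ∧
        (∀ x y : Q, f (tri x y) = triP (f x) (f y)) ∧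
        (∀ x : Q, f (sq x) = sqP w (f x))) := by
  classical
  have hfinite : Finite Q := Nat.finite_of_card_ne_zero (by rw [hcard]; norm_num)
  letI : Fintype Q := Fintype.ofFinite Q
  have hcard' : Fintype.card Q = 4 := by rw [← Nat.card_eq_fintype_card, hcard]
  have inj : ∀ {x y b : Q}, tri x b = tri y b → x = y := by
    intro x y b h
    have h2 := congrArg (fun t => trid t b) h
    simpa only [(hinv x b).1, (hinv y b).1] using h2
  have cover4 : ∀ (a b c d : Q), a ≠ b → a ≠ c → a ≠ d → b ≠ c → b ≠ d → c ≠ d →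
      ∀ t : Q, t = a ∨ t = b ∨ t = c ∨ t = d := by
    intro a b c d h1 h2 h3 h4 h5 h6 t
    by_contra hc
    push_neg at hc
    obtain ⟨e1, e2, e3, e4⟩ := hc
    have hm : ({t, a, b, c, d} : Finset Q).card = 5 := by
      rw [Finset.card_insert_of_notMem (by simp [e1, e2, e3, e4]),
        Finset.card_insert_of_notMem (by simp [h1, h2, h3]),
        Finset.card_insert_of_notMem (by simp [h4, h5]),
        Finset.card_insert_of_notMem (by simp [h6]),
        Finset.card_singleton]
    have hle := Finset.card_le_univ ({t, a, b, c, d} : Finset Q)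
    rw [hm] at hle
    omega
  have lemA : ∀ a b : Q, tri (tri a b) b = a := by
    intro a b
    by_contra hA
    have h1 : tri a b ≠ a := by
      intro h; apply hA; rw [h, h]
    have h2 : tri (tri a b) b ≠ tri a b := fun h => h1 (inj h)
    have hba : b ≠ a := by intro h; subst h; exact h1 (hidem _)
    have hb1 : b ≠ tri a b := by
      intro h
      apply h2
      rw [← h]; exact hidem b
    have hb2 : b ≠ tri (tri a b) b := by
      intro h
      have h3 : tri (tri a b) b = tri b b := by rw [hidem]; exact h.symm
      exact hb1 (inj h3).symm
    have cov := cover4 b a (tri a b) (tri (tri a b) b) hba hb1 hb2 (Ne.symm h1)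
      (Ne.symm hA) (Ne.symm h2)
    have htr : tri (tri (tri a b) b) b = a := by
      rcases cov (tri (tri (tri a b) b) b) with h|h|h|h
      · exact absurd (inj (h.trans (hidem b).symm)).symm hb2
      · exact h
      · exact absurd (inj h) hA
      · exact absurd (inj h) h2
    have hfix : tri (sq b) b = sq b := by
      have h5 := hsq2 b b; rw [hidem] at h5; exact h5
    have hsb : sq b = b := by
      rcases cov (sq b) with h|h|h|h
      · exact h
      · exfalso; rw [h] at hfix; exact h1 hfix
      · exfalso; rw [h] at hfix; exact h2 hfix
      · exfalso; rw [h] at hfix; exact (Ne.symm hA) (htr.symm.trans hfix)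
    have h6 := hsq1 a b
    rw [hsb] at h6
    exact h2 h6.symm
  have lemTriv : ∀ a b : Q, tri a (sq b) = a := fun a b => by rw [hsq1, lemA]
  obtain ⟨p, r, hpr⟩ := hnt
  obtain ⟨q, hq⟩ : ∃ q, tri p r = q := ⟨_, rfl⟩
  rw [hq] at hpr
  have hqr : tri q r = p := by rw [← hq, lemA]
  have hpq : p ≠ q := Ne.symm hpr
  have hrp : r ≠ p := by
    intro h; subst h
    rw [hidem] at hq
    exact hpq hq
  have hrq : r ≠ q := by
    intro h; subst h
    have h3 := inj (hq.trans (hidem r).symm)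
    exact hpr h3.symm
  obtain ⟨s, hs⟩ : ∃ s : Q, s ∉ ({p, q, r} : Finset Q) := by
    by_contra hcon
    push_neg at hcon
    have hsub : (Finset.univ : Finset Q) ⊆ {p, q, r} := fun t _ => hcon t
    have h1 := Finset.card_le_card hsub
    have a1 := Finset.card_insert_le p ({q, r} : Finset Q)
    have a2 := Finset.card_insert_le q ({r} : Finset Q)
    have a3 : ({r} : Finset Q).card = 1 := Finset.card_singleton r
    rw [Finset.card_univ, hcard'] at h1
    omega
  simp only [Finset.mem_insert, Finset.mem_singleton, not_or] at hs
  obtain ⟨hsp, hsq', hsr'⟩ := hs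
  have cover : ∀ t : Q, t = p ∨ t = q ∨ t = r ∨ t = s :=
    cover4 p q r s hpq (Ne.symm hrp) (Ne.symm hsp) (Ne.symm hrq) (Ne.symm hsq') (Ne.symm hsr')
  have hsr : tri s r = s := by
    rcases cover (tri s r) with h|h|h|h
    · exact absurd (inj (h.trans hqr.symm)) hsq'
    · exact absurd (inj (h.trans hq.symm)) hsp
    · exact absurd (inj (h.trans (hidem r).symm)) hsr'
    · exact h
  rcases cover (tri q p) with hv|hv|hv|hv
  · exact absurd (inj (hv.trans (hidem p).symm)) hpr
  · -- tri q p = q : P branch or contradiction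
    rcases cover (tri r p) with hu|hu|hu|hu
    · exact absurd (inj (hu.trans (hidem p).symm)) hrp
    · exact absurd (inj (hu.trans hv.symm)) hrq
    · -- P branch: tri r p = r
      have hsp2 : tri s p = s := by
        rcases cover (tri s p) with h|h|h|h
        · exact absurd (inj (h.trans (hidem p).symm)) hsp
        · exact absurd (inj (h.trans hv.symm)) hsq'
        · exact absurd (inj (h.trans hu.symm)) hsr'
        · exact h
      have Rp : ∀ t, tri t p = t := by
        intro t; rcases cover t with h|h|h|h <;> rw [h]
        · exact hidem p
        · exact hv
        · exact hu
        · exact hsp2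
      have Rq : ∀ t, tri t q = t := by
        intro t
        have h3 := hsd (tri t r) p r
        rw [Rp (tri t r), lemA t r, hq] at h3
        exact h3.symm
      have hps : tri p s = p := by
        rcases cover (tri p s) with h|h|h|h
        · exact h
        · exfalso
          have hsqr2 : tri (sq r) r = sq r := by
            have h5 := hsq2 r r; rw [hidem] at h5; exact h5
          rcases cover (sq r) with h6|h6|h6|h6
          · rw [h6] at hsqr2
            exact hpr (hq.symm.trans hsqr2)
          · rw [h6] at hsqr2
            exact hpq (hqr.symm.trans hsqr2)
          · have h7 := lemTriv p r; rw [h6] at h7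
            exact hpr (hq.symm.trans h7)
          · have h7 := lemTriv p r; rw [h6] at h7
            exact hpr (h.symm.trans h7)
        · exfalso
          have h3 := hsd p s r
          rw [h, hidem, hq, hsr] at h3
          exact hpq (inj (h3.symm.trans h.symm)).symm
        · exact absurd (inj (h.trans (hidem s).symm)) (Ne.symm hsp)
      have hqs : tri q s = q := by
        rcases cover (tri q s) with h|h|h|h
        · exact absurd (inj (h.trans hps.symm)) hpr
        · exact h
        · exfalso
          have h3 := hsd q s r
          rw [h, hidem, hqr, hsr, hps] at h3
          exact hrp h3
        · exact absurd (inj (h.trans (hidem s).symm)) (Ne.symm hsq')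
      have hrs : tri r s = r := by
        rcases cover (tri r s) with h|h|h|h
        · exact absurd (inj (h.trans hps.symm)) hrp
        · exact absurd (inj (h.trans hqs.symm)) hrq
        · exact h
        · exact absurd (inj (h.trans (hidem s).symm)) (Ne.symm hsr')
      have Rs : ∀ t, tri t s = t := by
        intro t; rcases cover t with h|h|h|h <;> rw [h]
        · exact hps
        · exact hqs
        · exact hrs
        · exact hidem s
      have hsqnr : ∀ b, sq b ≠ r := by
        intro b h
        have h7 := lemTriv p b; rw [h] at h7
        exact hpr (hq.symm.trans h7)
      have hsqr : sq r = s := by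
        have h5 := hsq2 r r; rw [hidem] at h5
        rcases cover (sq r) with h|h|h|h
        · rw [h] at h5; exact absurd (hq.symm.trans h5) hpr
        · rw [h] at h5; exact absurd (hqr.symm.trans h5) hpq
        · exact absurd h (hsqnr r)
        · exact h
      have hsqs : sq s = s := by
        have h5 := hsq2 s r; rw [hsr] at h5
        rcases cover (sq s) with h|h|h|h
        · rw [h] at h5; exact absurd (hq.symm.trans h5) hpr
        · rw [h] at h5; exact absurd (hqr.symm.trans h5) hpq
        · exact absurd h (hsqnr s)
        · exact h
      have hsqp2 : sq p = tri (sq q) r := by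
        have h5 := hsq2 p r; rw [hq] at h5
        rw [← h5, lemA]
      right
      let F : Q → P4 := fun t => if t = p then P4.p else if t = q then P4.q
        else if t = r then P4.r else P4.s
      have Fp : F p = P4.p := if_pos rfl
      have Fq : F q = P4.q := by simp [F, hpr]
      have Fr : F r = P4.r := by simp [F, hrp, hrq]
      have Fs : F s = P4.s := by simp [F, hsp, hsq', hsr']
      have Fbij : Function.Bijective F := by
        constructor
        · intro x y hxy
          rcases cover x with h|h|h|h <;> rcases cover y with h2|h2|h2|h2 <;>
            rw [h, h2] at hxy ⊢ <;>
            first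
            | rfl
            | (exfalso; simp only [Fp, Fq, Fr, Fs] at hxy; exact absurd hxy (by decide))
        · intro y
          cases y
          · exact ⟨p, Fp⟩
          · exact ⟨q, Fq⟩
          · exact ⟨r, Fr⟩
          · exact ⟨s, Fs⟩
      have htab : ∀ x y, F (tri x y) = triP (F x) (F y) := by
        intro x y
        rcases cover x with h|h|h|h <;> rcases cover y with h2|h2|h2|h2 <;> rw [h, h2] <;>
          simp only [hidem, hv, hu, hsp2, Rq, hps, hqs, hrs, hq, hqr, hsr, Fp, Fq, Fr, Fs] <;>
          rfl
      rcases cover (sq q) with hw|hw|hw|hw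
      · have hsqp3 : sq p = q := by rw [hsqp2, hw, hq]
        refine ⟨P4.p, by simp, F, Fbij, htab, ?_⟩
        intro x
        rcases cover x with h|h|h|h <;> rw [h] <;>
          simp only [hsqp3, hw, hsqr, hsqs, Fp, Fq, Fr, Fs] <;> rfl
      · have hsqp3 : sq p = p := by rw [hsqp2, hw, hqr]
        refine ⟨P4.q, by simp, F, Fbij, htab, ?_⟩
        intro x
        rcases cover x with h|h|h|h <;> rw [h] <;>
          simp only [hsqp3, hw, hsqr, hsqs, Fp, Fq, Fr, Fs] <;> rfl
      · exact absurd hw (hsqnr q)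
      · have hsqp3 : sq p = s := by rw [hsqp2, hw, hsr]
        refine ⟨P4.s, by simp, F, Fbij, htab, ?_⟩
        intro x
        rcases cover x with h|h|h|h <;> rw [h] <;>
          simp only [hsqp3, hw, hsqr, hsqs, Fp, Fq, Fr, Fs] <;> rfl
    · -- contradiction: tri r p = s
      exfalso
      have hrq2 : tri r q = s := by
        have h3 := hsd r p r
        rw [hu, hsr, hidem, hq] at h3
        exact h3.symm
      have hps2 : tri p s = q := by
        have h3 := hsd p r p
        rw [hq, hidem, hu, hv] at h3
        exact h3.symm
      rcases cover (sq p) with h|h|h|h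
      · have h7 := lemTriv r p; rw [h] at h7
        exact hsr' (hu.symm.trans h7)
      · have h7 := lemTriv r p; rw [h] at h7
        exact hsr' (hrq2.symm.trans h7)
      · have h7 := lemTriv p p; rw [h] at h7
        exact hpr (hq.symm.trans h7)
      · have h7 := lemTriv p p; rw [h] at h7
        exact hpr (hps2.symm.trans h7)
  · -- tri q p = r : S23 branch
    have hrp2 : tri r p = q := by rw [← hv, lemA]
    have hsp2 : tri s p = s := by
      rcases cover (tri s p) with h|h|h|h
      · exact absurd (inj (h.trans (hidem p).symm)) hsp
      · exact absurd (inj (h.trans hrp2.symm)) hsr'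
      · exact absurd (inj (h.trans hv.symm)) hsq'
      · exact h
    have hpq2 : tri p q = r := by
      have h3 := hsd q p r
      rw [hv, hidem, hqr, hq] at h3
      exact h3.symm
    have hrq2 : tri r q = p := by rw [← hpq2, lemA]
    have hsq2' : tri s q = s := by
      rcases cover (tri s q) with h|h|h|h
      · exact absurd (inj (h.trans hrq2.symm)) hsr'
      · exact absurd (inj (h.trans (hidem q).symm)) hsq'
      · exact absurd (inj (h.trans hpq2.symm)) hsp
      · exact h
    have hps : tri p s = p := by
      rcases cover (tri p s) with h|h|h|h
      · exact h
      · exfalso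
        have h3 := hsd p s p
        rw [h, hv, hidem, hsp2, h] at h3
        exact hrq h3
      · exfalso
        have h3 := hsd p s r
        rw [h, hidem, hq, hsr] at h3
        exact hpq (inj (h3.symm.trans h.symm)).symm
      · exact absurd (inj (h.trans (hidem s).symm)) (Ne.symm hsp)
    have hqs : tri q s = q := by
      rcases cover (tri q s) with h|h|h|h
      · exact absurd (inj (h.trans hps.symm)) hpr
      · exact h
      · exfalso
        have h3 := hsd q s r
        rw [h, hidem, hqr, hsr, hps] at h3
        exact hrp h3
      · exact absurd (inj (h.trans (hidem s).symm)) (Ne.symm hsq')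
    have hrs : tri r s = r := by
      rcases cover (tri r s) with h|h|h|h
      · exact absurd (inj (h.trans hps.symm)) hrp
      · exact absurd (inj (h.trans hqs.symm)) hrq
      · exact h
      · exact absurd (inj (h.trans (hidem s).symm)) (Ne.symm hsr')
    have hsqall : ∀ b, sq b = s := by
      intro b
      rcases cover (sq b) with h|h|h|h
      · exfalso
        have h7 := lemTriv q b; rw [h, hv] at h7
        exact hrq h7
      · exfalso
        have h7 := lemTriv p b; rw [h, hpq2] at h7
        exact hrp h7
      · exfalso
        have h7 := lemTriv p b; rw [h, hq] at h7
        exact hpr h7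
      · exact h
    left
    let F : Q → Equiv.Perm (Fin 3) := fun t => if t = p then Equiv.swap 1 2
      else if t = q then Equiv.swap 0 2 else if t = r then Equiv.swap 0 1 else 1
    have Fp : F p = Equiv.swap 1 2 := if_pos rfl
    have Fq : F q = Equiv.swap 0 2 := by simp [F, hpr]
    have Fr : F r = Equiv.swap 0 1 := by simp [F, hrp, hrq]
    have Fs : F s = 1 := by simp [F, hsp, hsq', hsr']
    refine ⟨F, ?_, ?_, ?_, ?_⟩
    · intro x y hxy
      rcases cover x with h|h|h|h <;> rcases cover y with h2|h2|h2|h2 <;>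
        rw [h, h2] at hxy ⊢ <;>
        first
        | rfl
        | (exfalso; simp only [Fp, Fq, Fr, Fs] at hxy; exact absurd hxy (by decide))
    · apply Set.eq_of_subset_of_subset
      · rintro x ⟨t, rfl⟩
        rcases cover t with h|h|h|h <;> rw [h]
        · rw [Fp]; simp [S23set]
        · rw [Fq]; simp [S23set]
        · rw [Fr]; simp [S23set]
        · rw [Fs]; simp [S23set]
      · intro x hx
        simp only [S23set, Set.mem_insert_iff, Set.mem_singleton_iff] at hx
        rcases hx with rfl|rfl|rfl|rfl
        · exact ⟨s, Fs⟩
        · exact ⟨r, Fr⟩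
        · exact ⟨p, Fp⟩
        · exact ⟨q, Fq⟩
    · intro x y
      rcases cover x with h|h|h|h <;> rcases cover y with h2|h2|h2|h2 <;> rw [h, h2] <;>
        simp only [hidem, hv, hrp2, hsp2, hpq2, hrq2, hsq2', hq, hqr, hsr, hps, hqs, hrs,
          Fp, Fq, Fr, Fs] <;>
        decide
    · intro x
      rcases cover x with h|h|h|h <;> rw [h] <;>
        simp only [hsqall, Fp, Fq, Fr, Fs] <;> decide
  · -- tri q p = s : contradiction
    exfalso
    have hsp3 : tri s p = q := by rw [← hv, lemA]
    rcases cover (tri r p) with hu|hu|hu|hu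
    · exact absurd (inj (hu.trans (hidem p).symm)) hrp
    · exact absurd (inj (hu.trans hsp3.symm)) (Ne.symm hsr')
    · have h3 := hsd p r p
      rw [hq, hidem, hu, hq, hv] at h3
      exact hsq' h3
    · exact absurd (inj (hu.trans hv.symm)) hrq

/-- Classification of 4-element squandles with non-trivial quandle operation: each such
squandle is isomorphic either to `S²₃ ⊂ S₃` (with conjugation and squaring) or to
`(P, ⊲, ς_w)` for some `w ∈ {p, q, s}`; moreover these four structures are squandles
and are pairwise non-isomorphic. -/
theorem squandle4_classification :
    -- classification
    (∀ (Q : Type) (tri trid : Q → Q → Q) (sq : Q → Q), Nat.card Q = 4 →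
      (∀ a b c, tri (tri a b) c = tri (tri a c) (tri b c)) →
      (∀ a b, trid (tri a b) b = a ∧ tri (trid a b) b = a) →
      (∀ a, tri a a = a) →
      (∀ a b, tri a (sq b) = tri (tri a b) b) →
      (∀ a b, tri (sq a) b = sq (tri a b)) →
      (∃ a b : Q, tri a b ≠ a) →
      (∃ f : Q → Equiv.Perm (Fin 3), Function.Injective f ∧ Set.range f = S23set ∧
        (∀ x y : Q, f (tri x y) = (f y)⁻¹ * f x * f y) ∧
        (∀ x : Q, f (sq x) = (f x) ^ 2)) ∨
      (∃ w ∈ ({P4.p, P4.q, P4.s} : Set P4), ∃ f : Q → P4, Function.Bijective f ∧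
        (∀ x y : Q, f (tri x y) = triP (f x) (f y)) ∧
        (∀ x : Q, f (sq x) = sqP w (f x)))) ∧
    -- S²₃ is a squandle: closure and squandle axioms for conjugation and squaring
    (∀ a ∈ S23set, ∀ b ∈ S23set, b⁻¹ * a * b ∈ S23set ∧ a ^ 2 ∈ S23set) ∧
    (∀ a ∈ S23set, ∀ b ∈ S23set, ∀ c ∈ S23set,
      c⁻¹ * (b⁻¹ * a * b) * c
        = (c⁻¹ * b * c)⁻¹ * (c⁻¹ * a * c) * (c⁻¹ * b * c) ∧
      b * (b⁻¹ * a * b) * b⁻¹ = a ∧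
      b⁻¹ * (b * a * b⁻¹) * b = a ∧
      a⁻¹ * a * a = a ∧
      (b ^ 2)⁻¹ * a * b ^ 2 = b⁻¹ * (b⁻¹ * a * b) * b ∧
      (b⁻¹ * a * b) ^ 2 = b⁻¹ * a ^ 2 * b) ∧
    -- the structures (P, ⊲, ς_w) are squandles
    (∀ w ∈ ({P4.p, P4.q, P4.s} : Set P4),
      (∀ a b c : P4, triP (triP a b) c = triP (triP a c) (triP b c)) ∧
      (∀ a b : P4, triP (triP a b) b = a) ∧
      (∀ a : P4, triP a a = a) ∧
      (∀ a b : P4, triP a (sqP w b) = triP (triP a b) b) ∧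
      (∀ a b : P4, triP (sqP w a) b = sqP w (triP a b))) ∧
    -- no (P, ⊲, ς_w) is isomorphic to S²₃
    (∀ w ∈ ({P4.p, P4.q, P4.s} : Set P4),
      ¬ ∃ f : P4 → Equiv.Perm (Fin 3), Function.Injective f ∧ Set.range f = S23set ∧
          (∀ x y : P4, f (triP x y) = (f y)⁻¹ * f x * f y) ∧
          (∀ x : P4, f (sqP w x) = (f x) ^ 2)) ∧
    -- the three (P, ⊲, ς_w) are pairwise non-isomorphic
    (∀ w ∈ ({P4.p, P4.q, P4.s} : Set P4), ∀ w' ∈ ({P4.p, P4.q, P4.s} : Set P4), w ≠ w' →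
      ¬ ∃ f : P4 → P4, Function.Bijective f ∧
          (∀ x y : P4, f (triP x y) = triP (f x) (f y)) ∧
          (∀ x : P4, f (sqP w x) = sqP w' (f x))) := by
  refine ⟨fun Q tri trid sq => classify Q tri trid sq, ?_, ?_, ?_, ?_, ?_⟩
  · -- closure
    intro a ha b hb
    simp only [S23set, Set.mem_insert_iff, Set.mem_singleton_iff] at *
    rcases ha with rfl|rfl|rfl|rfl <;> rcases hb with rfl|rfl|rfl|rfl <;>
      exact ⟨by decide, by decide⟩
  · -- group identities
    intro a _ b _ c _
    refine ⟨by group, by group, by group, by group, ?_, ?_⟩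
    · rw [pow_two]; group
    · rw [pow_two, pow_two]; group
  · -- (P, ⊲, ς_w) are squandles
    intro w hw
    simp only [Set.mem_insert_iff, Set.mem_singleton_iff] at hw
    rcases hw with rfl|rfl|rfl <;>
      exact ⟨by decide, by decide, by decide, by decide, by decide⟩
  · -- not isomorphic to S23
    intro w _
    rintro ⟨f, hinj, hrange, htri, -⟩
    have h1 : Equiv.swap (0:Fin 3) 1 ∈ Set.range f := by rw [hrange]; simp [S23set]
    have h2 : Equiv.swap (1:Fin 3) 2 ∈ Set.range f := by rw [hrange]; simp [S23set]
    have h3 : Equiv.swap (0:Fin 3) 2 ∈ Set.range f := by rw [hrange]; simp [S23set]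
    obtain ⟨x, hx⟩ := h1
    obtain ⟨y, hy⟩ := h2
    obtain ⟨z, hz⟩ := h3
    have hyr : y = P4.r := by
      apply triP_ne (x := x)
      intro h
      have h4 := htri x y
      rw [h, hx, hy] at h4
      exact absurd h4 (by decide)
    have hzr : z = P4.r := by
      apply triP_ne (x := x)
      intro h
      have h4 := htri x z
      rw [h, hx, hz] at h4
      exact absurd h4 (by decide)
    rw [hyr.trans hzr.symm, hz] at hy
    exact absurd hy (by decide)
  · -- pairwise non-isomorphic
    intro w hw w' hw' hne
    rintro ⟨f, hbij, htri, hsq⟩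
    simp only [Set.mem_insert_iff, Set.mem_singleton_iff] at hw hw'
    have hfr : f P4.r = P4.r := by
      apply triP_ne (x := f P4.p)
      intro h
      have h2 := htri P4.p P4.r
      rw [h] at h2
      exact absurd (hbij.1 h2) (by decide)
    have hfq : f P4.q = tau (f P4.p) := by
      have h2 := htri P4.p P4.r
      rw [hfr] at h2
      exact h2
    have hfs : f P4.s = P4.s := by
      have h2 := htri P4.s P4.r
      rw [hfr] at h2
      have h3 : f P4.s = tau (f P4.s) := h2
      cases hfsv : f P4.s
      · rw [hfsv] at h3; exact absurd h3 (by decide)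
      · rw [hfsv] at h3; exact absurd h3 (by decide)
      · exact absurd (hbij.1 (hfsv.trans hfr.symm)) (by decide)
      · rfl
    have hfp : f P4.p = P4.p ∨ f P4.p = P4.q := by
      cases hfpv : f P4.p
      · left; rfl
      · right; rfl
      · exact absurd (hbij.1 (hfpv.trans hfr.symm)) (by decide)
      · exact absurd (hbij.1 (hfpv.trans hfs.symm)) (by decide)
    have key : f w = sqP w' (f P4.q) := hsq P4.q
    rw [hfq] at key
    rcases hfp with hfp | hfp
    · have hfw : f w = w := by
        rcases hw with rfl|rfl|rfl
        · exact hfp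
        · rw [hfq, hfp]; try rfl
        · exact hfs
      rw [hfw, hfp] at key
      exact hne key
    · have hfw : f w = tau w := by
        rcases hw with rfl|rfl|rfl
        · exact hfp
        · rw [hfq, hfp]; try rfl
        · exact hfs
      rw [hfw, hfp] at key
      apply hne
      rcases hw with rfl|rfl|rfl <;> rcases hw' with rfl|rfl|rfl <;>
        first | rfl | exact absurd key (by decide)
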